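/- arXiv:1706.03564 — 2 statements merged into one kernel-verified Lean document; each statement's English description precedes it below -/
import Mathlib

section
/- Let τ > 0, ρ > 0, M₀ > 0 and 0 ≤ A < ρ. Define T* := τ M₀ / (ρ − A), w(t) := max(M₀ − ((ρ − A)/τ) t, 0) for t ≥ 0, and η(t) := 1 if t < T* and η(t) := A/ρ if t ≥ T*. Then: (i) w(0) = M₀ and w is Lipschitz continuous on [0, ∞); (ii) η(t) ∈ sign(w(t)) for every t ≥ 0; (iii) for every t ≥ 0 with t ≠ T*, w is differentiable at t and τ w'(t) + ρ η(t) = A; (iv) w(t) = 0 for every t ≥ T*, and w(t) > 0 for every t ∈ [0, T*). -/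
/-- The set-valued sign operator: `sign r = {r/|r|}` for `r ≠ 0`, `sign 0 = [-1,1]`. -/
noncomputable def signSet (r : ℝ) : Set ℝ :=
  if r = 0 then Set.Icc (-1 : ℝ) 1 else {r / |r|}

/-- Let `τ, ρ, M₀ > 0` and `0 ≤ A < ρ`, and set `T* = τ M₀ / (ρ - A)`,
`w(t) = max (M₀ - ((ρ - A)/τ) t) 0` and `η(t) = 1` for `t < T*`, `η(t) = A/ρ`
for `t ≥ T*`.  Then: (i) `w(0) = M₀` and `w` is Lipschitz on `[0, ∞)`;
(ii) `η(t) ∈ sign(w(t))` for all `t ≥ 0`; (iii) for every `t ≥ 0` with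
`t ≠ T*`, `w` is differentiable at `t` with `τ w'(t) + ρ η(t) = A`;
(iv) `w(t) = 0` for `t ≥ T*` and `w(t) > 0` for `0 ≤ t < T*`. -/
theorem auxiliary_sliding_ode_solution
    (τ ρ M₀ A : ℝ) (hτ : 0 < τ) (hρ : 0 < ρ) (hM₀ : 0 < M₀)
    (hA0 : 0 ≤ A) (hAρ : A < ρ)
    (Tstar : ℝ) (hTstar : Tstar = τ * M₀ / (ρ - A))
    (w : ℝ → ℝ) (hw : ∀ t, w t = max (M₀ - ((ρ - A) / τ) * t) 0)
    (η : ℝ → ℝ) (hη : ∀ t, η t = if t < Tstar then 1 else A / ρ) :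
    (w 0 = M₀ ∧ ∃ K : NNReal, LipschitzOnWith K w (Set.Ici 0)) ∧
    (∀ t : ℝ, 0 ≤ t → η t ∈ signSet (w t)) ∧
    (∀ t : ℝ, 0 ≤ t → t ≠ Tstar →
      ∃ d : ℝ, HasDerivAt w d t ∧ τ * d + ρ * η t = A) ∧
    ((∀ t : ℝ, Tstar ≤ t → w t = 0) ∧ ∀ t : ℝ, 0 ≤ t → t < Tstar → 0 < w t) := by
  have hρA : 0 < ρ - A := by linarith
  set c : ℝ := (ρ - A) / τ with hc
  clear_value c
  have hcpos : 0 < c := by rw [hc]; exact div_pos hρA hτ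
  have hT : Tstar = M₀ / c := by
    rw [hTstar, hc]
    field_simp
  have hTpos : 0 < Tstar := by rw [hT]; exact div_pos hM₀ hcpos
  -- key equivalence
  have key : ∀ t : ℝ, t < Tstar ↔ 0 < M₀ - c * t := by
    intro t
    rw [hT, lt_div_iff₀ hcpos]
    constructor <;> intro h <;> nlinarith
  have hlt : ∀ t : ℝ, t < Tstar → w t = M₀ - c * t := by
    intro t ht
    rw [hw t, max_eq_left ((key t).1 ht).le]
  have hge : ∀ t : ℝ, Tstar ≤ t → w t = 0 := by
    intro t ht
    rw [hw t, max_eq_right]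
    have hnp : ¬ 0 < M₀ - c * t := fun hp => absurd ((key t).2 hp) (not_lt.2 ht)
    linarith [not_lt.1 hnp]
  refine ⟨⟨?_, ?_⟩, ?_, ?_, ?_, ?_⟩
  · rw [hlt 0 hTpos]; ring
  · refine ⟨⟨c, hcpos.le⟩, ?_⟩
    have h1 : LipschitzWith ⟨c, hcpos.le⟩ (fun t : ℝ => M₀ - c * t) := by
      apply LipschitzWith.of_dist_le_mul
      intro x y
      simp only [Real.dist_eq]
      rw [show (M₀ - c * x) - (M₀ - c * y) = c * (y - x) by ring, abs_mul,
        abs_of_pos hcpos, abs_sub_comm y x]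
      exact le_refl _
    have h2 : LipschitzWith ⟨c, hcpos.le⟩ w := by
      have := h1.max_const 0
      convert this using 1
      funext t
      exact hw t
    exact h2.lipschitzOnWith
  · intro t ht
    rcases lt_or_ge t Tstar with h | h
    · rw [hη t, if_pos h]
      have hwt : 0 < w t := by rw [hlt t h]; exact (key t).1 h
      rw [signSet, if_neg hwt.ne', abs_of_pos hwt, div_self hwt.ne']
      exact rfl
    · rw [hη t, if_neg (not_lt.2 h)]
      rw [signSet, if_pos (hge t h)]
      constructor
      · linarith [div_nonneg hA0 hρ.le]
      · rw [div_le_one hρ]; exact hAρ.le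
  · intro t ht htne
    rcases lt_or_ge t Tstar with h | h
    · refine ⟨-c, ?_, ?_⟩
      · have hd : HasDerivAt (fun s : ℝ => M₀ - c * s) (-c) t := by
          simpa using ((hasDerivAt_id t).const_mul c).const_sub M₀
        apply hd.congr_of_eventuallyEq
        filter_upwards [eventually_lt_nhds h] with s hs
        exact hlt s hs
      · rw [hη t, if_pos h, hc]
        field_simp
        ring
    · have h' : Tstar < t := lt_of_le_of_ne h (Ne.symm htne)
      refine ⟨0, ?_, ?_⟩
      · apply (hasDerivAt_const t (0:ℝ)).congr_of_eventuallyEq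
        filter_upwards [eventually_gt_nhds h'] with s hs
        exact hge s hs.le
      · rw [hη t, if_neg (not_lt.2 h)]
        field_simp
        ring
  · exact hge
  · intro t ht h
    rw [hlt t h]; exact (key t).1 h
end

section
/- Let τ > 0, ρ > 0, A ∈ ℝ and T > 0. Suppose w₁, w₂ : [0, T] → ℝ are Lipschitz continuous with w₁(0) = w₂(0), and suppose there exist measurable functions η₁, η₂ : [0, T] → ℝ such that, for i = 1, 2 and for almost every t ∈ [0, T], ηᵢ(t) ∈ sign(wᵢ(t)), wᵢ is differentiable at t, and τ wᵢ'(t) + ρ ηᵢ(t) = A. Then w₁(t) = w₂(t) for every t ∈ [0, T]. (Uniqueness of the auxiliary sliding ODE, following from the monotonicity of sign.) -/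
open MeasureTheory Filter Topology intervalIntegral

lemma seq_tendsto_slope {f : ℝ → ℝ} {d c : ℝ} (hf : HasDerivAt f d c) :
    Tendsto (fun n : ℕ => (f (c + 1/(n+1)) - f c) / (1/(n+1))) atTop (𝓝 d) := by
  have hseq : Tendsto (fun n : ℕ => c + 1/((n:ℝ)+1)) atTop (𝓝[≠] c) := by
    apply tendsto_nhdsWithin_of_tendsto_nhds_of_eventually_within
    · have := tendsto_one_div_add_atTop_nhds_zero_nat (𝕜 := ℝ)
      simpa using (tendsto_const_nhds (x := c)).add this
    · filter_upwards with n
      have : (0:ℝ) < 1/((n:ℝ)+1) := by positivity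
      simp only [Set.mem_compl_iff, Set.mem_singleton_iff]
      intro h
      nlinarith [h]
  have hslope := (hasDerivAt_iff_tendsto_slope.1 hf).comp hseq
  refine hslope.congr fun n => ?_
  simp [slope_def_field]

lemma lip_antitone_of_ae_deriv_nonpos (G : ℝ → ℝ) (K : NNReal) (hG : LipschitzWith K G)
    (a b : ℝ) (hab : a ≤ b)
    (h : ∀ᵐ t ∂(volume.restrict (Set.Ioc a b)), DifferentiableAt ℝ G t ∧ deriv G t ≤ 0) :
    G b ≤ G a := by
  set μ := volume.restrict (Set.Ioc a b) with hμ
  have hGc : Continuous G := hG.continuous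
  have hint : ∀ c d : ℝ, IntervalIntegrable G volume c d := fun c d => hGc.intervalIntegrable c d
  set Φ : ℝ → ℝ := fun s => ∫ x in a..s, G x with hΦdef
  have hΦ : ∀ c : ℝ, HasDerivAt Φ (G c) c := fun c =>
    integral_hasDerivAt_right (hint a c)
      hGc.aestronglyMeasurable.stronglyMeasurableAtFilter hGc.continuousAt
  set F : ℕ → ℝ → ℝ := fun n t => (G (t + 1/(n+1)) - G t) / (1/(n+1)) with hFdef
  -- Step C: the interval integral of F n
  have hC : ∀ n : ℕ, (∫ t in a..b, F n t) =
      (Φ (b + 1/(n+1)) - Φ b) / (1/(n+1)) - (Φ (a + 1/(n+1)) - Φ a) / (1/(n+1)) := by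
    intro n
    set h : ℝ := 1/((n:ℝ)+1) with hh
    have hGh : IntervalIntegrable (fun t => G (t + h)) volume a b :=
      (hGc.comp (continuous_id.add continuous_const)).intervalIntegrable a b
    have e1 : (∫ t in a..b, F n t) = ((∫ t in a..b, G (t + h)) - ∫ t in a..b, G t) / h := by
      rw [← intervalIntegral.integral_sub hGh (hint a b), ← intervalIntegral.integral_div]
    rw [e1, intervalIntegral.integral_comp_add_right G h]
    have e2 : (∫ x in (a+h)..(b+h), G x) = Φ (b + h) - Φ (a + h) := by
      rw [hΦdef]
      simp only
      rw [← intervalIntegral.integral_interval_sub_left (hint a (b+h)) (hint a (a+h))]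
    have e3 : Φ b - Φ a = ∫ t in a..b, G t := by
      simp [hΦdef]
    rw [e2, ← e3]
    ring
  -- Step D: convergence to G b - G a
  have hD : Tendsto (fun n : ℕ => ∫ t in a..b, F n t) atTop (𝓝 (G b - G a)) := by
    have hb' := seq_tendsto_slope (hΦ b)
    have ha' := seq_tendsto_slope (hΦ a)
    have := hb'.sub ha'
    refine this.congr fun n => (hC n).symm
  -- Step E: dominated convergence to the integral of deriv G
  have hE : Tendsto (fun n : ℕ => ∫ t, F n t ∂μ) atTop (𝓝 (∫ t, deriv G t ∂μ)) := by
    apply MeasureTheory.tendsto_integral_filter_of_dominated_convergence (fun _ => (K : ℝ))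
    · filter_upwards with n
      exact ((hGc.comp (continuous_id.add continuous_const)).sub hGc).div_const _
        |>.aestronglyMeasurable
    · filter_upwards with n
      filter_upwards with t
      have hpos : (0:ℝ) < 1/((n:ℝ)+1) := by positivity
      have := hG.dist_le_mul (t + 1/(n+1)) t
      rw [Real.dist_eq, Real.dist_eq] at this
      simp only [add_sub_cancel_left] at this
      rw [abs_of_pos hpos] at this
      have hF : ‖F n t‖ = |G (t + 1/(n+1)) - G t| / (1/(n+1)) := by
        rw [hFdef, Real.norm_eq_abs, abs_div, abs_of_pos hpos]
      rw [hF]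
      rw [div_le_iff₀ hpos]
      calc |G (t + 1/(n+1)) - G t| ≤ K * (1/(n+1)) := this
        _ = K * (1/(n+1)) := rfl
    · exact integrableOn_const measure_Ioc_lt_top.ne
    · filter_upwards [h] with t ht
      exact seq_tendsto_slope ht.1.hasDerivAt
  -- combine
  have heq : ∀ n : ℕ, (∫ t in a..b, F n t) = ∫ t, F n t ∂μ := fun n =>
    intervalIntegral.integral_of_le hab
  have hlim : G b - G a = ∫ t, deriv G t ∂μ := by
    apply tendsto_nhds_unique (hD.congr fun n => heq n) hE
  have hneg : (∫ t, deriv G t ∂μ) ≤ 0 := by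
    apply integral_nonpos_of_ae
    filter_upwards [h] with t ht using ht.2
  linarith [hlim ▸ hneg]

lemma signSet_mul_eq_abs {x a : ℝ} (ha : a ∈ signSet x) : a * x = |x| ∧ |a| ≤ 1 := by
  unfold signSet at ha
  by_cases hx : x = 0
  · simp [hx] at ha ⊢
    exact abs_le.2 ha
  · simp [hx] at ha
    subst ha
    constructor
    · rw [div_mul_eq_mul_div, ← abs_mul_abs_self x]
      field_simp
    · rw [abs_div, abs_abs, div_self (abs_ne_zero.2 hx)]

lemma signSet_monotone {x y a b : ℝ} (ha : a ∈ signSet x) (hb : b ∈ signSet y) :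
    0 ≤ (x - y) * (a - b) := by
  obtain ⟨hax, ha1⟩ := signSet_mul_eq_abs ha
  obtain ⟨hby, hb1⟩ := signSet_mul_eq_abs hb
  have hay : a * y ≤ |y| := by
    calc a * y ≤ |a * y| := le_abs_self _
    _ = |a| * |y| := abs_mul _ _
    _ ≤ 1 * |y| := by gcongr
    _ = |y| := one_mul _
  have hbx : b * x ≤ |x| := by
    calc b * x ≤ |b * x| := le_abs_self _
    _ = |b| * |x| := abs_mul _ _
    _ ≤ 1 * |x| := by gcongr
    _ = |x| := one_mul _
  nlinarith [hax, hby, hay, hbx]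


/-- Uniqueness for the auxiliary sliding ODE `τ w' + ρ η = A`, `η ∈ sign w`:
if `w₁, w₂` are Lipschitz on `[0, T]` with the same initial value and each
solves the differential inclusion a.e. on `[0, T]`, then `w₁ = w₂` on `[0, T]`.
(This follows from the monotonicity of `sign`.) -/
theorem auxiliary_sliding_ode_uniqueness
    (τ ρ A T : ℝ) (hτ : 0 < τ) (hρ : 0 < ρ) (hT : 0 < T)
    (w₁ w₂ η₁ η₂ : ℝ → ℝ)
    (hw₁lip : ∃ K : NNReal, LipschitzOnWith K w₁ (Set.Icc 0 T))
    (hw₂lip : ∃ K : NNReal, LipschitzOnWith K w₂ (Set.Icc 0 T))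
    (hinit : w₁ 0 = w₂ 0)
    (hη₁meas : Measurable η₁) (hη₂meas : Measurable η₂)
    (hae₁ : ∀ᵐ t ∂(volume.restrict (Set.Icc 0 T)),
      η₁ t ∈ signSet (w₁ t) ∧ DifferentiableAt ℝ w₁ t ∧
        τ * deriv w₁ t + ρ * η₁ t = A)
    (hae₂ : ∀ᵐ t ∂(volume.restrict (Set.Icc 0 T)),
      η₂ t ∈ signSet (w₂ t) ∧ DifferentiableAt ℝ w₂ t ∧
        τ * deriv w₂ t + ρ * η₂ t = A) :
    ∀ t ∈ Set.Icc (0 : ℝ) T, w₁ t = w₂ t := by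
  obtain ⟨K₁, hw₁⟩ := hw₁lip
  obtain ⟨K₂, hw₂⟩ := hw₂lip
  -- the 1-Lipschitz projection onto [0, T]
  set proj : ℝ → ℝ := fun t => min (max t 0) T with hprojdef
  have hprojmem : ∀ t, proj t ∈ Set.Icc (0:ℝ) T := fun t =>
    ⟨le_min (le_max_right t 0) hT.le, min_le_right _ _⟩
  have hprojid : ∀ t ∈ Set.Icc (0:ℝ) T, proj t = t := by
    intro t ht
    simp [hprojdef, max_eq_left ht.1, min_eq_left ht.2]
  have hprojlip : LipschitzWith 1 proj := by
    apply LipschitzWith.of_dist_le_mul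
    intro s t
    rw [Real.dist_eq, Real.dist_eq]
    simp only [NNReal.coe_one, one_mul]
    calc |proj s - proj t| ≤ max |max s 0 - max t 0| |T - T| :=
          abs_min_sub_min_le_max _ _ _ _
      _ = |max s 0 - max t 0| := by simp
      _ ≤ |s - t| := abs_max_sub_max_le_abs _ _ _
  -- compositions with the projection
  have hcomp : ∀ (K : NNReal) (w : ℝ → ℝ), LipschitzOnWith K w (Set.Icc 0 T) →
      LipschitzWith K (w ∘ proj) := by
    intro K w hw
    intro x y
    calc edist (w (proj x)) (w (proj y)) ≤ K * edist (proj x) (proj y) :=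
          hw (hprojmem x) (hprojmem y)
      _ ≤ K * edist x y := by
          have := hprojlip x y
          simp only [ENNReal.coe_one, one_mul] at this
          exact mul_le_mul_right this K
  set U : ℝ → ℝ := fun t => w₁ (proj t) - w₂ (proj t) with hUdef
  have hU : LipschitzWith (K₁ + K₂) U :=
    ((hcomp K₁ w₁ hw₁).sub (hcomp K₂ w₂ hw₂))
  have hU0 : U 0 = 0 := by
    have h0 : proj 0 = 0 := hprojid 0 ⟨le_refl 0, hT.le⟩
    simp [hUdef, h0, hinit]
  -- bound on |U|
  set L : ℝ := (K₁ : ℝ) + K₂ with hLdef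
  have hL0 : 0 ≤ L := by positivity
  have hUbd : ∀ t, |U t| ≤ L * T := by
    intro t
    have hpp : proj (proj t) = proj t := hprojid _ (hprojmem t)
    have h1 : U t = U (proj t) := by simp [hUdef, hpp]
    have h2 := hU.dist_le_mul (proj t) 0
    rw [Real.dist_eq, Real.dist_eq, hU0, sub_zero, sub_zero] at h2
    have h3 : |proj t| ≤ T := by
      rw [abs_of_nonneg (hprojmem t).1]
      exact (hprojmem t).2
    have hc : ((K₁ + K₂ : NNReal) : ℝ) = L := by push_cast [hLdef]; ring
    calc |U t| = |U (proj t)| := by rw [h1]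
      _ ≤ L * |proj t| := by rw [← hc]; exact h2
      _ ≤ L * T := by gcongr
  -- G = U², Lipschitz
  set G : ℝ → ℝ := fun t => (U t)^2 with hGdef
  set KG : NNReal := 2 * (K₁ + K₂) * (K₁ + K₂) * T.toNNReal with hKGdef
  have hKG : (KG : ℝ) = 2 * L * L * T := by
    push_cast [hKGdef, hLdef]
    rw [Real.coe_toNNReal _ hT.le]
  have hGlip : LipschitzWith KG G := by
    apply LipschitzWith.of_dist_le_mul
    intro s t
    rw [Real.dist_eq, Real.dist_eq, hKG]
    have h1 : |U s - U t| ≤ L * |s - t| := by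
      have := hU.dist_le_mul s t
      rw [Real.dist_eq, Real.dist_eq] at this
      have hc : ((K₁ + K₂ : NNReal) : ℝ) = L := by push_cast [hLdef]; ring
      rw [hc] at this
      exact this
    have h2 : |U s + U t| ≤ 2 * (L * T) := by
      calc |U s + U t| ≤ |U s| + |U t| := abs_add_le _ _
        _ ≤ L * T + L * T := add_le_add (hUbd s) (hUbd t)
        _ = 2 * (L * T) := by ring
    calc |G s - G t| = |U s + U t| * |U s - U t| := by
          rw [hGdef, ← abs_mul]; ring_nf
      _ ≤ (2 * (L * T)) * (L * |s - t|) := by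
          apply mul_le_mul h2 h1 (abs_nonneg _) (by positivity)
      _ = 2 * L * L * T * |s - t| := by ring
  -- a.e. derivative of G is nonpositive on [0, T]
  have hend : ∀ᵐ t ∂(volume.restrict (Set.Icc (0:ℝ) T)), t ≠ 0 ∧ t ≠ T := by
    apply ae_restrict_of_ae
    have h0 : ∀ᵐ t : ℝ ∂volume, t ≠ 0 := by
      rw [ae_iff]
      simpa using measure_singleton (0:ℝ)
    have hTT : ∀ᵐ t : ℝ ∂volume, t ≠ T := by
      rw [ae_iff]
      simpa using measure_singleton T
    filter_upwards [h0, hTT] with t h1 h2 using ⟨h1, h2⟩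
  have hder : ∀ᵐ t ∂(volume.restrict (Set.Icc (0:ℝ) T)),
      DifferentiableAt ℝ G t ∧ deriv G t ≤ 0 := by
    filter_upwards [hae₁, hae₂, ae_restrict_mem measurableSet_Icc, hend] with t h1 h2 hmem hend'
    have htIoo : t ∈ Set.Ioo (0:ℝ) T :=
      ⟨lt_of_le_of_ne hmem.1 (Ne.symm hend'.1), lt_of_le_of_ne hmem.2 hend'.2⟩
    have hEq : G =ᶠ[nhds t] fun s => (w₁ s - w₂ s)^2 := by
      filter_upwards [Ioo_mem_nhds htIoo.1 htIoo.2] with s hs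
      have : proj s = s := hprojid s ⟨hs.1.le, hs.2.le⟩
      simp [hGdef, hUdef, this]
    have hd : HasDerivAt (fun s => (w₁ s - w₂ s)^2)
        (2 * (w₁ t - w₂ t) * (deriv w₁ t - deriv w₂ t)) t := by
      have := (h1.2.1.hasDerivAt.fun_sub h2.2.1.hasDerivAt).fun_pow 2
      refine this.congr_deriv ?_
      push_cast
      ring
    have hGd : HasDerivAt G (2 * (w₁ t - w₂ t) * (deriv w₁ t - deriv w₂ t)) t :=
      hd.congr_of_eventuallyEq hEq
    refine ⟨hGd.differentiableAt, ?_⟩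
    rw [hGd.deriv]
    have hmono : 0 ≤ (w₁ t - w₂ t) * (η₁ t - η₂ t) := signSet_monotone h1.1 h2.1
    have e1 := h1.2.2
    have e2 := h2.2.2
    have e3 : τ * (deriv w₁ t - deriv w₂ t) = -(ρ * (η₁ t - η₂ t)) := by linarith
    have e4 : τ * (2 * (w₁ t - w₂ t) * (deriv w₁ t - deriv w₂ t)) =
        -(2 * ρ * ((w₁ t - w₂ t) * (η₁ t - η₂ t))) := by
      linear_combination (2 * (w₁ t - w₂ t)) * e3
    have e5 : τ * (2 * (w₁ t - w₂ t) * (deriv w₁ t - deriv w₂ t)) ≤ 0 := by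
      rw [e4]
      nlinarith [mul_nonneg hρ.le hmono]
    nlinarith [e5]
  -- conclude
  intro t ht
  have hsub : Set.Ioc (0:ℝ) t ⊆ Set.Icc 0 T := fun s hs => ⟨hs.1.le, hs.2.trans ht.2⟩
  have hder' : ∀ᵐ s ∂(volume.restrict (Set.Ioc (0:ℝ) t)),
      DifferentiableAt ℝ G s ∧ deriv G s ≤ 0 :=
    ae_restrict_of_ae_restrict_of_subset hsub hder
  have := lip_antitone_of_ae_deriv_nonpos G KG hGlip 0 t ht.1 hder'
  have hG0 : G 0 = 0 := by simp [hGdef, hU0]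
  have hGt : G t = (w₁ t - w₂ t)^2 := by
    simp [hGdef, hUdef, hprojid t ht]
  rw [hG0, hGt] at this
  have : (w₁ t - w₂ t)^2 = 0 := le_antisymm this (sq_nonneg _)
  have h6 := pow_eq_zero_iff two_ne_zero |>.mp this
  linarith [h6]
end
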